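/- Singular curl value (matrix form of the graph skein relation for a 4-valent vertex with a curl): for all a, b ∈ Fin n, Σ_{i ∈ Fin n} Q((a,i),(b,i)) · q^{s(i)} = [n+1] · (if a = b then 1 else 0), where [n+1] is the quantum integer. -/

import Mathlib

open LaurentPolynomial Matrix Finset

/-- The Yang-Baxter matrix `R` for a positive crossing. -/
noncomputable def Rmat (n : ℕ) : Matrix (Fin n × Fin n) (Fin n × Fin n) (LaurentPolynomial ℤ) :=
  fun p r =>
    if p.1 = r.1 ∧ p.2 = r.2 ∧ p.1 < p.2 then T 1 - T (-1)
    else if p.1 = p.2 ∧ p.2 = r.1 ∧ r.1 = r.2 then T 1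
    else if p.1 = r.2 ∧ p.2 = r.1 ∧ p.1 ≠ p.2 then 1
    else 0

/-- The Yang-Baxter matrix `R̄` for a negative crossing. -/
noncomputable def Rbar (n : ℕ) : Matrix (Fin n × Fin n) (Fin n × Fin n) (LaurentPolynomial ℤ) :=
  fun p r =>
    if p.1 = r.1 ∧ p.2 = r.2 ∧ p.2 < p.1 then T (-1) - T 1
    else if p.1 = p.2 ∧ p.2 = r.1 ∧ r.1 = r.2 then T (-1)
    else if p.1 = r.2 ∧ p.2 = r.1 ∧ p.1 ≠ p.2 then 1
    else 0

/-- The matrix `Q` for a singular crossing. -/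
noncomputable def Qmat (n : ℕ) : Matrix (Fin n × Fin n) (Fin n × Fin n) (LaurentPolynomial ℤ) :=
  fun p r =>
    if p.1 = p.2 ∧ p.2 = r.1 ∧ r.1 = r.2 then T 1 + T (-1)
    else if p.1 = r.1 ∧ p.2 = r.2 ∧ p.1 < p.2 then T 1
    else if p.1 = r.1 ∧ p.2 = r.2 ∧ p.2 < p.1 then T (-1)
    else if p.1 = r.2 ∧ p.2 = r.1 ∧ p.1 ≠ p.2 then 1
    else 0

/-- The spin of the index `i ∈ Fin n`: the corresponding element of
`{1-n, 3-n, …, n-3, n-1}`. -/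
def spin (n : ℕ) (i : Fin n) : ℤ := 2 * (i : ℤ) - ((n : ℤ) - 1)

/-- The quantum integer `[m] = q^{m-1} + q^{m-3} + ⋯ + q^{1-m}`. -/
noncomputable def qint (m : ℕ) : LaurentPolynomial ℤ :=
  ∑ k ∈ Finset.range m, T (2 * (k : ℤ) - ((m : ℤ) - 1))

/-- The singular curl evaluates to the quantum integer `[n+1]` times the identity. -/
theorem singular_curl (n : ℕ) (hn : 2 ≤ n) (a b : Fin n) :
    ∑ i : Fin n, Qmat n (a, i) (b, i) * T (spin n i) =
      qint (n + 1) * (if a = b then 1 else 0) := by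
  rcases eq_or_ne a b with rfl | hab
  · rw [if_pos rfl, mul_one]
    -- pointwise description
    have key : ∀ i : Fin n, Qmat n (a, i) (a, i) * T (spin n i) =
        (if (a : ℕ) ≤ (i : ℕ) then T (2 * ((i : ℕ) : ℤ) + 2 - (n : ℤ)) else 0)
        + (if (i : ℕ) ≤ (a : ℕ) then T (2 * ((i : ℕ) : ℤ) - (n : ℤ)) else 0) := by
      intro i
      rcases lt_trichotomy a i with h | h | h
      · have h1 : Qmat n (a, i) (a, i) = T 1 := by
          simp [Qmat, h, h.ne, h.ne']
        rw [h1, if_pos (Fin.le_def.mp h.le), if_neg (by exact not_le.mpr (Fin.lt_def.mp h)),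
          add_zero, ← T_add, spin]
        congr 1; ring
      · subst h
        have h1 : Qmat n (a, a) (a, a) = T 1 + T (-1) := by simp [Qmat]
        rw [h1, if_pos le_rfl, if_pos le_rfl, add_mul, ← T_add, ← T_add, spin]
        congr 2 <;> ring
      · have h1 : Qmat n (a, i) (a, i) = T (-1) := by
          simp [Qmat, h, h.ne, h.ne', not_lt_of_gt h]
        rw [h1, if_neg (by exact not_le.mpr (Fin.lt_def.mp h)), if_pos (Fin.le_def.mp h.le),
          zero_add, ← T_add, spin]
        congr 1; ring
    rw [Finset.sum_congr rfl (fun i _ => key i), Finset.sum_add_distrib]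
    have ha : (a : ℕ) < n := a.isLt
    rw [Fin.sum_univ_eq_sum_range
        (fun k => if (a : ℕ) ≤ k then T (2 * (k : ℤ) + 2 - (n : ℤ)) else 0) n,
      Fin.sum_univ_eq_sum_range
        (fun k => if k ≤ (a : ℕ) then T (2 * (k : ℤ) - (n : ℤ)) else 0) n]
    have e1 : (∑ k ∈ Finset.range n, if (a : ℕ) ≤ k then (T (2 * (k : ℤ) + 2 - (n : ℤ)) : LaurentPolynomial ℤ) else 0)
        = ∑ k ∈ Finset.Ico ((a : ℕ) + 1) (n + 1), T (2 * (k : ℤ) - (n : ℤ)) := by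
      rw [Finset.range_eq_Ico,
        ← Finset.sum_Ico_consecutive _ (Nat.zero_le (a : ℕ)) ha.le]
      rw [Finset.sum_congr rfl (fun k hk => if_neg (by
          exact not_le.mpr (Finset.mem_Ico.mp hk).2)),
        Finset.sum_const_zero, zero_add,
        Finset.sum_congr rfl (fun k hk => if_pos (Finset.mem_Ico.mp hk).1)]
      rw [Finset.sum_Ico_eq_sum_range, Finset.sum_Ico_eq_sum_range]
      have : n + 1 - ((a : ℕ) + 1) = n - (a : ℕ) := by omega
      rw [this]
      refine Finset.sum_congr rfl fun j _ => ?_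
      congr 1; push_cast; ring
    have e2 : (∑ k ∈ Finset.range n, if k ≤ (a : ℕ) then (T (2 * (k : ℤ) - (n : ℤ)) : LaurentPolynomial ℤ) else 0)
        = ∑ k ∈ Finset.range ((a : ℕ) + 1), T (2 * (k : ℤ) - (n : ℤ)) := by
      rw [Finset.range_eq_Ico,
        ← Finset.sum_Ico_consecutive _ (Nat.zero_le ((a : ℕ) + 1)) (by omega : (a:ℕ)+1 ≤ n)]
      rw [Finset.sum_congr rfl (fun k hk => if_pos (by
          have := (Finset.mem_Ico.mp hk).2; omega)),
        Finset.sum_congr rfl (fun k hk => if_neg (by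
          have := (Finset.mem_Ico.mp hk).1; omega)),
        Finset.sum_const_zero, add_zero]
      rw [Finset.range_eq_Ico]
    rw [e1, e2, add_comm, qint]
    have : ((n : ℤ) + 1 - 1) = (n : ℤ) := by ring
    rw [Finset.range_eq_Ico (n + 1),
      ← Finset.sum_Ico_consecutive _ (Nat.zero_le ((a : ℕ) + 1)) (by omega : (a:ℕ)+1 ≤ n+1),
      ← Finset.range_eq_Ico]
    push_cast
    refine congrArg₂ (· + ·) ?_ ?_ <;> exact Finset.sum_congr rfl fun k _ => by congr 1; ring
  · rw [if_neg hab, mul_zero]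
    refine Finset.sum_eq_zero fun i _ => ?_
    have h0 : Qmat n (a, i) (b, i) = 0 := by
      simp only [Qmat]
      split_ifs with h1 h2 h3 h4
      · exact absurd (h1.1.trans h1.2.1) hab
      · exact absurd h2.1 hab
      · exact absurd h3.1 hab
      · exact absurd (h4.1.trans h4.2.1) hab
      · rfl
    rw [h0, zero_mul]
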